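/- If U ≥ U0 and J ≥ J0, then the Hamiltonian H = Σ_{x=1}^{L−1} H_x is positive semi-definite: ⟨ψ, H ψ⟩ ≥ 0 for every ψ ∈ 𝓥. -/

import Mathlib

open scoped ComplexOrder

noncomputable section

/-- `w_x = sin(δ/2)` for odd `x`, `cos(δ/2)` for even `x`. -/
def wR (δ : ℝ) (x : ℕ) : ℝ := if Odd x then Real.sin (δ/2) else Real.cos (δ/2)

/-- On-site potential `μ_x = −(V/2)(1 − (−1)^x cos δ)`. -/
def muPot (Vv δ : ℝ) (x : ℕ) : ℝ := -(Vv/2) * (1 - (-1 : ℝ)^x * Real.cos δ)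

/-- Bond-charge coupling `X_x = (−1)^{x+1} X0` with `X0 = (V/2) sin δ cos δ`. -/
def Xpar (Vv δ : ℝ) (x : ℕ) : ℝ := (-1 : ℝ)^(x+1) * ((Vv/2) * Real.sin δ * Real.cos δ)

/-- The Pauli matrices `p^{(1)}, p^{(2)}, p^{(3)}`; spin indices are `Bool`
with `true = ↑` (first row/column) and `false = ↓`. -/
def pauli : Fin 3 → Bool → Bool → ℂ
  | 0, σ, τ => if σ ≠ τ then 1 else 0
  | 1, σ, τ => if σ = true ∧ τ = false then -Complex.I
               else if σ = false ∧ τ = true then Complex.I else 0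
  | 2, σ, τ => if σ = τ then (if σ = true then 1 else -1) else 0

variable {𝓥 : Type*} [NormedAddCommGroup 𝓥] [InnerProductSpace ℂ 𝓥]

/-- Number operator `n_{x,σ} = c_{x,σ}† c_{x,σ}`. -/
def nOp (c cdag : ℕ → Bool → Module.End ℂ 𝓥) (x : ℕ) (σ : Bool) : Module.End ℂ 𝓥 :=
  cdag x σ * c x σ

/-- Number operator `n_x = n_{x,↑} + n_{x,↓}`. -/
def ntot (c cdag : ℕ → Bool → Module.End ℂ 𝓥) (x : ℕ) : Module.End ℂ 𝓥 :=
  nOp c cdag x true + nOp c cdag x false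

/-- Spin operator `S_x^{(l)} = (1/2) Σ_{σ,τ} c_{x,σ}† p^{(l)}_{σ,τ} c_{x,τ}`. -/
def spinOp (c cdag : ℕ → Bool → Module.End ℂ 𝓥) (x : ℕ) (l : Fin 3) : Module.End ℂ 𝓥 :=
  (1/2 : ℂ) • ∑ σ : Bool, ∑ τ : Bool, pauli l σ τ • (cdag x σ * c x τ)

/-- Hopping term `H_{t,x}`. -/
def Ht (t Vv δ : ℝ) (c cdag : ℕ → Bool → Module.End ℂ 𝓥) (x : ℕ) : Module.End ℂ 𝓥 :=
  (-t : ℂ) • ∑ σ : Bool, (cdag x σ * c (x+1) σ + cdag (x+1) σ * c x σ)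
    - (muPot Vv δ x : ℂ) • ntot c cdag x - (muPot Vv δ (x+1) : ℂ) • ntot c cdag (x+1)

/-- On-site interaction `H_{U,x}`. -/
def HU (U : ℝ) (c cdag : ℕ → Bool → Module.End ℂ 𝓥) (x : ℕ) : Module.End ℂ 𝓥 :=
  (U : ℂ) • (nOp c cdag x true * nOp c cdag x false
    + nOp c cdag (x+1) true * nOp c cdag (x+1) false)

/-- Charge-charge interaction `H_{V,x} = −V n_x n_{x+1}`. -/
def HV (Vv : ℝ) (c cdag : ℕ → Bool → Module.End ℂ 𝓥) (x : ℕ) : Module.End ℂ 𝓥 :=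
  (-Vv : ℂ) • (ntot c cdag x * ntot c cdag (x+1))

/-- Spin-spin interaction `H_{J,x} = J(n_x n_{x+1}/4 − S_x · S_{x+1})`. -/
def HJ (J : ℝ) (c cdag : ℕ → Bool → Module.End ℂ 𝓥) (x : ℕ) : Module.End ℂ 𝓥 :=
  (J : ℂ) • ((1/4 : ℂ) • (ntot c cdag x * ntot c cdag (x+1))
    - ∑ l : Fin 3, spinOp c cdag x l * spinOp c cdag (x+1) l)

/-- Bond-charge interaction `H_{X,x}` with `X_x = (−1)^{x+1} X0`. -/
def HX (Vv δ : ℝ) (c cdag : ℕ → Bool → Module.End ℂ 𝓥) (x : ℕ) : Module.End ℂ 𝓥 :=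
  ∑ σ : Bool,
    ((Xpar Vv δ x : ℂ) • nOp c cdag x (!σ) + (Xpar Vv δ (x+1) : ℂ) • nOp c cdag (x+1) (!σ))
      * (cdag x σ * c (x+1) σ + cdag (x+1) σ * c x σ)

/-- The local Hamiltonian `H_x = H_{t,x} + H_{U,x} + H_{V,x} + H_{J,x} + H_{X,x}`. -/
def Hloc (t Vv δ U J : ℝ) (c cdag : ℕ → Bool → Module.End ℂ 𝓥) (x : ℕ) : Module.End ℂ 𝓥 :=
  Ht t Vv δ c cdag x + HU U c cdag x + HV Vv c cdag x + HJ J c cdag x + HX Vv δ c cdag x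



set_option maxHeartbeats 8000000
section SOSAux

variable {𝓥 : Type*} [NormedAddCommGroup 𝓥] [InnerProductSpace ℂ 𝓥]

lemma sw0 {R : Type*} [Ring R] {u v : R} (h : u*v + v*u = 0) : v*u = -(u*v) := by
  have h' : v*u + u*v = 0 := by rw [add_comm]; exact h
  exact eq_neg_of_add_eq_zero_left h'

lemma sw0' {R : Type*} [Ring R] {u v : R} (h : u*v + v*u = 0) (t : R) :
    v*(u*t) = -(u*(v*t)) := by
  rw [← mul_assoc, sw0 h, neg_mul, mul_assoc]

lemma dl1 {R : Type*} [Ring R] {u v : R} (h : u*v + v*u = 1) : v*u = 1 - u*v := by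
  have h' : v*u + u*v = 1 := by rw [add_comm]; exact h
  exact eq_sub_of_add_eq h'

lemma dl1' {R : Type*} [Ring R] {u v : R} (h : u*v + v*u = 1) (t : R) :
    v*(u*t) = t - u*(v*t) := by
  rw [← mul_assoc, dl1 h, sub_mul, one_mul, mul_assoc]

lemma sqz {M : Type*} [AddCommGroup M] [Module ℂ M] {x : M} (h : x + x = 0) : x = 0 := by
  have h2 : (2:ℂ) • x = 0 := by rw [two_smul]; exact h
  simpa using (smul_eq_zero.mp h2).resolve_left (by norm_num)

lemma sqz' {R : Type*} [Ring R] {u : R} (h : u*u = 0) (t : R) : u*(u*t) = 0 := by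
  rw [← mul_assoc, h, zero_mul]

lemma pauli_0_true_true : pauli 0 true true = 0 := rfl
lemma pauli_0_true_false : pauli 0 true false = 1 := rfl
lemma pauli_0_false_true : pauli 0 false true = 1 := rfl
lemma pauli_0_false_false : pauli 0 false false = 0 := rfl
lemma pauli_1_true_true : pauli 1 true true = 0 := rfl
lemma pauli_1_true_false : pauli 1 true false = (-Complex.I) := rfl
lemma pauli_1_false_true : pauli 1 false true = Complex.I := rfl
lemma pauli_1_false_false : pauli 1 false false = 0 := rfl
lemma pauli_2_true_true : pauli 2 true true = 1 := rfl
lemma pauli_2_true_false : pauli 2 true false = 0 := rfl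
lemma pauli_2_false_true : pauli 2 false true = 0 := rfl
lemma pauli_2_false_false : pauli 2 false false = (-1) := rfl

lemma spin_sum_eq (c cdag : ℕ → Bool → Module.End ℂ 𝓥) (x y : ℕ) :
    ∑ l : Fin 3, spinOp c cdag x l * spinOp c cdag y l
      = (1/2 : ℂ) • (cdag x true * c x false * (cdag y false * c y true))
        + (1/2 : ℂ) • (cdag x false * c x true * (cdag y true * c y false))
        + (1/4 : ℂ) • ((cdag x true * c x true - cdag x false * c x false)
            * (cdag y true * c y true - cdag y false * c y false)) := by
  simp only [spinOp, Fin.sum_univ_three, Fintype.sum_bool, pauli_0_true_true, pauli_0_true_false, pauli_0_false_true, pauli_0_false_false, pauli_1_true_true, pauli_1_true_false, pauli_1_false_true, pauli_1_false_false, pauli_2_true_true, pauli_2_true_false, pauli_2_false_true, pauli_2_false_false,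
    zero_smul, one_smul, neg_smul, smul_add, smul_sub, smul_neg, smul_smul,
    add_zero, zero_add, smul_mul_assoc, mul_smul_comm, mul_add, add_mul, mul_sub, sub_mul]
  match_scalars
  all_goals try ring_nf
  all_goals try simp [Complex.I_sq]
  all_goals try ring1

def AdjPair (A B : Module.End ℂ 𝓥) : Prop :=
  ∀ u v : 𝓥, (inner ℂ (A u) v : ℂ) = inner ℂ u (B v)

lemma AdjPair.symm' {A B : Module.End ℂ 𝓥} (h : AdjPair A B) : AdjPair B A := by
  intro u v
  have h2 := h v u
  rw [← inner_conj_symm, ← h2, inner_conj_symm]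

lemma AdjPair.one : AdjPair (1 : Module.End ℂ 𝓥) 1 := fun u v => rfl

lemma AdjPair.mul {A A' B B' : Module.End ℂ 𝓥} (hA : AdjPair A A') (hB : AdjPair B B') :
    AdjPair (A*B) (B'*A') := by
  intro u v
  rw [Module.End.mul_apply, Module.End.mul_apply, hA, hB]

lemma AdjPair.add {A A' B B' : Module.End ℂ 𝓥} (hA : AdjPair A A') (hB : AdjPair B B') :
    AdjPair (A+B) (A'+B') := by
  intro u v
  rw [LinearMap.add_apply, LinearMap.add_apply, inner_add_left, inner_add_right, hA, hB]

lemma AdjPair.sub {A A' B B' : Module.End ℂ 𝓥} (hA : AdjPair A A') (hB : AdjPair B B') :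
    AdjPair (A-B) (A'-B') := by
  intro u v
  rw [LinearMap.sub_apply, LinearMap.sub_apply, inner_sub_left, inner_sub_right, hA, hB]

lemma AdjPair.smulC {z : ℂ} (hz : (starRingEnd ℂ) z = z) {A B : Module.End ℂ 𝓥}
    (h : AdjPair A B) : AdjPair (z • A) (z • B) := by
  intro u v
  rw [LinearMap.smul_apply, LinearMap.smul_apply, inner_smul_left, inner_smul_right, hz, h]

lemma term_nonneg {D Dd : Module.End ℂ 𝓥} (h : AdjPair D Dd) (r : ℝ) (hr : 0 ≤ r)
    (z : ℂ) (hz : z = (r : ℂ)) (ψ : 𝓥) :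
    (0:ℂ) ≤ inner ℂ ψ ((z • (Dd * D)) ψ) := by
  have h1 : (inner ℂ ψ ((Dd * D) ψ) : ℂ) = ((‖D ψ‖^2 : ℝ) : ℂ) := by
    rw [Module.End.mul_apply, ← h ψ (D ψ)]
    exact_mod_cast inner_self_eq_norm_sq_to_K (D ψ)
  rw [LinearMap.smul_apply, inner_smul_right, h1, hz, ← Complex.ofReal_mul]
  exact_mod_cast mul_nonneg hr (by positivity)

end SOSAux

/-- if `U ≥ U0` and `J ≥ J0`, then `H = Σ_{x=1}^{L−1} H_x` is
positive semi-definite: `⟨ψ, H ψ⟩ ≥ 0` for every `ψ`. -/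
theorem statement5 (L : ℕ) (hL3 : 3 ≤ L) (hLodd : Odd L)
    (t Vv : ℝ) (ht : 0 < t) (htV : 2*t ≤ Vv)
    (δ : ℝ) (hδ0 : 0 < δ) (hδ1 : δ ≤ Real.pi / 2) (hδ : Real.sin δ = 2*t/Vv)
    (U J : ℝ) (hU : U ≥ Vv * Real.sin δ ^ 2) (hJ : J ≥ Vv * (2 - Real.sin δ ^ 2))
    (c cdag : ℕ → Bool → Module.End ℂ 𝓥)
    (hadj : ∀ x ∈ Finset.Icc 1 L, ∀ (σ : Bool) (ψ φ : 𝓥),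
      (inner ℂ (cdag x σ ψ) φ : ℂ) = inner ℂ ψ (c x σ φ))
    (car_cc : ∀ x ∈ Finset.Icc 1 L, ∀ y ∈ Finset.Icc 1 L, ∀ σ τ : Bool,
      c x σ * c y τ + c y τ * c x σ = 0)
    (car_dd : ∀ x ∈ Finset.Icc 1 L, ∀ y ∈ Finset.Icc 1 L, ∀ σ τ : Bool,
      cdag x σ * cdag y τ + cdag y τ * cdag x σ = 0)
    (car_dc : ∀ x ∈ Finset.Icc 1 L, ∀ y ∈ Finset.Icc 1 L, ∀ σ τ : Bool,
      cdag x σ * c y τ + c y τ * cdag x σ = if x = y ∧ σ = τ then 1 else 0) :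
    ∀ ψ : 𝓥, 0 ≤ (inner ℂ ψ ((∑ x ∈ Finset.Icc 1 (L-1), Hloc t Vv δ U J c cdag x) ψ) : ℂ) := by
  intro ψ
  have hVpos : (0:ℝ) < Vv := lt_of_lt_of_le (by linarith) htV
  have hsum : (∑ x ∈ Finset.Icc 1 (L-1), Hloc t Vv δ U J c cdag x) ψ
      = ∑ x ∈ Finset.Icc 1 (L-1), (Hloc t Vv δ U J c cdag x) ψ := by
    simp [Finset.sum_apply']
  rw [hsum, inner_sum]
  apply Finset.sum_nonneg
  intro x hx
  obtain ⟨hx1, hx2⟩ := Finset.mem_Icc.mp hx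
  have hxL : x ∈ Finset.Icc 1 L := Finset.mem_Icc.mpr ⟨hx1, by omega⟩
  have hx1L : x+1 ∈ Finset.Icc 1 L := Finset.mem_Icc.mpr ⟨by omega, by omega⟩
  set w1 : ℝ := wR δ x with hw1def
  set w2 : ℝ := wR δ (x+1) with hw2def
  have hcos2 : Real.cos δ = Real.cos (δ/2)^2 - Real.sin (δ/2)^2 := by
    have h := Real.cos_two_mul (δ/2)
    have hpy := Real.sin_sq_add_cos_sq (δ/2)
    have h3 : (2:ℝ) * (δ/2) = δ := by ring
    rw [h3] at h; linarith
  have hsin2 : Real.sin δ = 2*(Real.sin (δ/2)*Real.cos (δ/2)) := by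
    have h := Real.sin_two_mul (δ/2)
    have h3 : (2:ℝ) * (δ/2) = δ := by ring
    rw [h3] at h; linarith
  have hoddcase : ∀ m : ℕ, Odd m → wR δ m = Real.sin (δ/2) := by
    intro m hm; rw [wR, if_pos hm]
  have hevencase : ∀ m : ℕ, ¬ Odd m → wR δ m = Real.cos (δ/2) := by
    intro m hm; rw [wR, if_neg hm]
  have hpyth : w1^2 + w2^2 = 1 := by
    rcases Nat.even_or_odd x with hp | hp
    · have h1 : ¬ Odd x := by rw [Nat.even_iff] at hp; rw [Nat.odd_iff]; omega
      have h2 : Odd (x+1) := by rw [Nat.even_iff] at hp; rw [Nat.odd_iff]; omega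
      rw [hw1def, hw2def, hevencase x h1, hoddcase (x+1) h2]
      linear_combination Real.sin_sq_add_cos_sq (δ/2)
    · have h2 : ¬ Odd (x+1) := by rw [Nat.odd_iff] at hp ⊢; omega
      rw [hw1def, hw2def, hoddcase x hp, hevencase (x+1) h2]
      linear_combination Real.sin_sq_add_cos_sq (δ/2)
  have hsinw : Real.sin δ = 2*(w1*w2) := by
    rcases Nat.even_or_odd x with hp | hp
    · have h1 : ¬ Odd x := by rw [Nat.even_iff] at hp; rw [Nat.odd_iff]; omega
      have h2 : Odd (x+1) := by rw [Nat.even_iff] at hp; rw [Nat.odd_iff]; omega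
      rw [hw1def, hw2def, hevencase x h1, hoddcase (x+1) h2, hsin2]; try ring
    · have h2 : ¬ Odd (x+1) := by rw [Nat.odd_iff] at hp ⊢; omega
      rw [hw1def, hw2def, hoddcase x hp, hevencase (x+1) h2, hsin2]; try ring
  have hmu1 : muPot Vv δ x = -(Vv*w2^2) := by
    rcases Nat.even_or_odd x with hp | hp
    · have h1 : ¬ Odd x := by rw [Nat.even_iff] at hp; rw [Nat.odd_iff]; omega
      have h2 : Odd (x+1) := by rw [Nat.even_iff] at hp; rw [Nat.odd_iff]; omega
      rw [hw2def, hoddcase (x+1) h2, muPot, hp.neg_one_pow, hcos2]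
      linear_combination (Vv/2) * Real.sin_sq_add_cos_sq (δ/2)
    · have h2 : ¬ Odd (x+1) := by rw [Nat.odd_iff] at hp ⊢; omega
      rw [hw2def, hevencase (x+1) h2, muPot, hp.neg_one_pow, hcos2]
      linear_combination (Vv/2) * Real.sin_sq_add_cos_sq (δ/2)
  have hmu2 : muPot Vv δ (x+1) = -(Vv*w1^2) := by
    rcases Nat.even_or_odd x with hp | hp
    · have h1 : ¬ Odd x := by rw [Nat.even_iff] at hp; rw [Nat.odd_iff]; omega
      have h2 : Odd (x+1) := by rw [Nat.even_iff] at hp; rw [Nat.odd_iff]; omega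
      rw [hw1def, hevencase x h1, muPot, h2.neg_one_pow, hcos2]
      linear_combination (Vv/2) * Real.sin_sq_add_cos_sq (δ/2)
    · have h2 : Even (x+1) := by rw [Nat.odd_iff] at hp; rw [Nat.even_iff]; omega
      rw [hw1def, hoddcase x hp, muPot, h2.neg_one_pow, hcos2]
      linear_combination (Vv/2) * Real.sin_sq_add_cos_sq (δ/2)
  have hXx : Xpar Vv δ x = Vv*(w1*w2)*(w2^2-w1^2) := by
    rcases Nat.even_or_odd x with hp | hp
    · have h1 : ¬ Odd x := by rw [Nat.even_iff] at hp; rw [Nat.odd_iff]; omega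
      have h2 : Odd (x+1) := by rw [Nat.even_iff] at hp; rw [Nat.odd_iff]; omega
      rw [hw1def, hw2def, hevencase x h1, hoddcase (x+1) h2, Xpar, h2.neg_one_pow, hsin2, hcos2]
      try ring
    · have h2 : Even (x+1) := by rw [Nat.odd_iff] at hp; rw [Nat.even_iff]; omega
      rw [hw1def, hw2def, hoddcase x hp, hevencase (x+1) (by rw [Nat.odd_iff] at hp ⊢; omega), Xpar, h2.neg_one_pow, hsin2, hcos2]
      try ring
  have hXx1 : Xpar Vv δ (x+1) = -(Vv*(w1*w2)*(w2^2-w1^2)) := by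
    rcases Nat.even_or_odd x with hp | hp
    · have h1 : ¬ Odd x := by rw [Nat.even_iff] at hp; rw [Nat.odd_iff]; omega
      have h2 : Odd (x+1) := by rw [Nat.even_iff] at hp; rw [Nat.odd_iff]; omega
      have h3 : Even (x+1+1) := by rw [Nat.even_iff] at hp ⊢; omega
      rw [hw1def, hw2def, hevencase x h1, hoddcase (x+1) h2, Xpar, h3.neg_one_pow, hsin2, hcos2]
      try ring
    · have h2 : ¬ Odd (x+1) := by rw [Nat.odd_iff] at hp ⊢; omega
      have h3 : Odd (x+1+1) := by rw [Nat.odd_iff] at hp ⊢; omega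
      rw [hw1def, hw2def, hoddcase x hp, hevencase (x+1) h2, Xpar, h3.neg_one_pow, hsin2, hcos2]
      try ring
  have hVne : Vv ≠ 0 := ne_of_gt hVpos
  have h7 : Real.sin δ * Vv = 2*t := by rw [hδ]; field_simp
  have htw : t = Vv*(w1*w2) := by
    rw [hsinw] at h7
    linear_combination (-1/2)*h7
  have htC : ((t:ℝ):ℂ) = (Vv:ℂ)*((w1:ℂ)*(w2:ℂ)) := by rw [htw]; push_cast; ring
  have hmu1C : ((muPot Vv δ x : ℝ):ℂ) = -((Vv:ℂ)*(w2:ℂ)^2) := by rw [hmu1]; push_cast; ring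
  have hmu2C : ((muPot Vv δ (x+1) : ℝ):ℂ) = -((Vv:ℂ)*(w1:ℂ)^2) := by rw [hmu2]; push_cast; ring
  have hXxC : ((Xpar Vv δ x : ℝ):ℂ) = (Vv:ℂ)*((w1:ℂ)*(w2:ℂ))*((w2:ℂ)^2-(w1:ℂ)^2) := by
    rw [hXx]; push_cast; ring
  have hXx1C : ((Xpar Vv δ (x+1) : ℝ):ℂ) = -((Vv:ℂ)*((w1:ℂ)*(w2:ℂ))*((w2:ℂ)^2-(w1:ℂ)^2)) := by
    rw [hXx1]; push_cast; ring
  have hU' : (0:ℝ) ≤ U - 4*Vv*(w1*w2)^2 := by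
    have e : Vv*Real.sin δ^2 = 4*Vv*(w1*w2)^2 := by rw [hsinw]; ring
    linarith [hU]
  have hJ' : (0:ℝ) ≤ (J - 2*Vv + 4*Vv*(w1*w2)^2)/2 := by
    have e : Vv*(2 - Real.sin δ^2) = 2*Vv - 4*Vv*(w1*w2)^2 := by rw [hsinw]; ring
    linarith [hJ]
  have hzC : ((w1:ℂ)^2 + (w2:ℂ)^2 - 1) = 0 := by
    have hcast : ((w1^2+w2^2 : ℝ) : ℂ) = ((1:ℝ):ℂ) := by rw [hpyth]
    push_cast at hcast
    linear_combination hcast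
  have sqa0 : (c x true) * (c x true) = 0 := sqz (car_cc x hxL x hxL true true)
  have sqa0p : ∀ tt : Module.End ℂ 𝓥, (c x true) * ((c x true) * tt) = 0 := fun tt => sqz' sqa0 tt
  have sqb0 : (cdag x true) * (cdag x true) = 0 := sqz (car_dd x hxL x hxL true true)
  have sqb0p : ∀ tt : Module.End ℂ 𝓥, (cdag x true) * ((cdag x true) * tt) = 0 := fun tt => sqz' sqb0 tt
  have sqa1 : (c x false) * (c x false) = 0 := sqz (car_cc x hxL x hxL false false)
  have sqa1p : ∀ tt : Module.End ℂ 𝓥, (c x false) * ((c x false) * tt) = 0 := fun tt => sqz' sqa1 tt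
  have sqb1 : (cdag x false) * (cdag x false) = 0 := sqz (car_dd x hxL x hxL false false)
  have sqb1p : ∀ tt : Module.End ℂ 𝓥, (cdag x false) * ((cdag x false) * tt) = 0 := fun tt => sqz' sqb1 tt
  have sqa2 : (c (x+1) true) * (c (x+1) true) = 0 := sqz (car_cc (x+1) hx1L (x+1) hx1L true true)
  have sqa2p : ∀ tt : Module.End ℂ 𝓥, (c (x+1) true) * ((c (x+1) true) * tt) = 0 := fun tt => sqz' sqa2 tt
  have sqb2 : (cdag (x+1) true) * (cdag (x+1) true) = 0 := sqz (car_dd (x+1) hx1L (x+1) hx1L true true)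
  have sqb2p : ∀ tt : Module.End ℂ 𝓥, (cdag (x+1) true) * ((cdag (x+1) true) * tt) = 0 := fun tt => sqz' sqb2 tt
  have sqa3 : (c (x+1) false) * (c (x+1) false) = 0 := sqz (car_cc (x+1) hx1L (x+1) hx1L false false)
  have sqa3p : ∀ tt : Module.End ℂ 𝓥, (c (x+1) false) * ((c (x+1) false) * tt) = 0 := fun tt => sqz' sqa3 tt
  have sqb3 : (cdag (x+1) false) * (cdag (x+1) false) = 0 := sqz (car_dd (x+1) hx1L (x+1) hx1L false false)
  have sqb3p : ∀ tt : Module.End ℂ 𝓥, (cdag (x+1) false) * ((cdag (x+1) false) * tt) = 0 := fun tt => sqz' sqb3 tt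
  have swa01 : (c x false) * (c x true) = -((c x true) * (c x false)) := sw0 (car_cc x hxL x hxL true false)
  have swa01p : ∀ tt : Module.End ℂ 𝓥, (c x false) * ((c x true) * tt) = -((c x true) * ((c x false) * tt)) := fun tt => sw0' (car_cc x hxL x hxL true false) tt
  have swb01 : (cdag x false) * (cdag x true) = -((cdag x true) * (cdag x false)) := sw0 (car_dd x hxL x hxL true false)
  have swb01p : ∀ tt : Module.End ℂ 𝓥, (cdag x false) * ((cdag x true) * tt) = -((cdag x true) * ((cdag x false) * tt)) := fun tt => sw0' (car_dd x hxL x hxL true false) tt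
  have swa02 : (c (x+1) true) * (c x true) = -((c x true) * (c (x+1) true)) := sw0 (car_cc x hxL (x+1) hx1L true true)
  have swa02p : ∀ tt : Module.End ℂ 𝓥, (c (x+1) true) * ((c x true) * tt) = -((c x true) * ((c (x+1) true) * tt)) := fun tt => sw0' (car_cc x hxL (x+1) hx1L true true) tt
  have swb02 : (cdag (x+1) true) * (cdag x true) = -((cdag x true) * (cdag (x+1) true)) := sw0 (car_dd x hxL (x+1) hx1L true true)
  have swb02p : ∀ tt : Module.End ℂ 𝓥, (cdag (x+1) true) * ((cdag x true) * tt) = -((cdag x true) * ((cdag (x+1) true) * tt)) := fun tt => sw0' (car_dd x hxL (x+1) hx1L true true) tt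
  have swa03 : (c (x+1) false) * (c x true) = -((c x true) * (c (x+1) false)) := sw0 (car_cc x hxL (x+1) hx1L true false)
  have swa03p : ∀ tt : Module.End ℂ 𝓥, (c (x+1) false) * ((c x true) * tt) = -((c x true) * ((c (x+1) false) * tt)) := fun tt => sw0' (car_cc x hxL (x+1) hx1L true false) tt
  have swb03 : (cdag (x+1) false) * (cdag x true) = -((cdag x true) * (cdag (x+1) false)) := sw0 (car_dd x hxL (x+1) hx1L true false)
  have swb03p : ∀ tt : Module.End ℂ 𝓥, (cdag (x+1) false) * ((cdag x true) * tt) = -((cdag x true) * ((cdag (x+1) false) * tt)) := fun tt => sw0' (car_dd x hxL (x+1) hx1L true false) tt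
  have swa12 : (c (x+1) true) * (c x false) = -((c x false) * (c (x+1) true)) := sw0 (car_cc x hxL (x+1) hx1L false true)
  have swa12p : ∀ tt : Module.End ℂ 𝓥, (c (x+1) true) * ((c x false) * tt) = -((c x false) * ((c (x+1) true) * tt)) := fun tt => sw0' (car_cc x hxL (x+1) hx1L false true) tt
  have swb12 : (cdag (x+1) true) * (cdag x false) = -((cdag x false) * (cdag (x+1) true)) := sw0 (car_dd x hxL (x+1) hx1L false true)
  have swb12p : ∀ tt : Module.End ℂ 𝓥, (cdag (x+1) true) * ((cdag x false) * tt) = -((cdag x false) * ((cdag (x+1) true) * tt)) := fun tt => sw0' (car_dd x hxL (x+1) hx1L false true) tt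
  have swa13 : (c (x+1) false) * (c x false) = -((c x false) * (c (x+1) false)) := sw0 (car_cc x hxL (x+1) hx1L false false)
  have swa13p : ∀ tt : Module.End ℂ 𝓥, (c (x+1) false) * ((c x false) * tt) = -((c x false) * ((c (x+1) false) * tt)) := fun tt => sw0' (car_cc x hxL (x+1) hx1L false false) tt
  have swb13 : (cdag (x+1) false) * (cdag x false) = -((cdag x false) * (cdag (x+1) false)) := sw0 (car_dd x hxL (x+1) hx1L false false)
  have swb13p : ∀ tt : Module.End ℂ 𝓥, (cdag (x+1) false) * ((cdag x false) * tt) = -((cdag x false) * ((cdag (x+1) false) * tt)) := fun tt => sw0' (car_dd x hxL (x+1) hx1L false false) tt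
  have swa23 : (c (x+1) false) * (c (x+1) true) = -((c (x+1) true) * (c (x+1) false)) := sw0 (car_cc (x+1) hx1L (x+1) hx1L true false)
  have swa23p : ∀ tt : Module.End ℂ 𝓥, (c (x+1) false) * ((c (x+1) true) * tt) = -((c (x+1) true) * ((c (x+1) false) * tt)) := fun tt => sw0' (car_cc (x+1) hx1L (x+1) hx1L true false) tt
  have swb23 : (cdag (x+1) false) * (cdag (x+1) true) = -((cdag (x+1) true) * (cdag (x+1) false)) := sw0 (car_dd (x+1) hx1L (x+1) hx1L true false)
  have swb23p : ∀ tt : Module.End ℂ 𝓥, (cdag (x+1) false) * ((cdag (x+1) true) * tt) = -((cdag (x+1) true) * ((cdag (x+1) false) * tt)) := fun tt => sw0' (car_dd (x+1) hx1L (x+1) hx1L true false) tt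
  have hdc00 : (cdag x true) * (c x true) + (c x true) * (cdag x true) = 1 := by
    have hh := car_dc x hxL x hxL true true
    rwa [if_pos ⟨rfl, rfl⟩] at hh
  have ab00 : (c x true) * (cdag x true) = 1 - (cdag x true) * (c x true) := dl1 hdc00
  have ab00p : ∀ tt : Module.End ℂ 𝓥, (c x true) * ((cdag x true) * tt) = tt - (cdag x true) * ((c x true) * tt) := fun tt => dl1' hdc00 tt
  have hdc01 : (cdag x false) * (c x true) + (c x true) * (cdag x false) = 0 := by
    have hh := car_dc x hxL x hxL false true
    rwa [if_neg (fun hc => absurd hc.2 (by decide))] at hh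
  have ab01 : (c x true) * (cdag x false) = -((cdag x false) * (c x true)) := sw0 hdc01
  have ab01p : ∀ tt : Module.End ℂ 𝓥, (c x true) * ((cdag x false) * tt) = -((cdag x false) * ((c x true) * tt)) := fun tt => sw0' hdc01 tt
  have hdc02 : (cdag (x+1) true) * (c x true) + (c x true) * (cdag (x+1) true) = 0 := by
    have hh := car_dc (x+1) hx1L x hxL true true
    rwa [if_neg (fun hc => absurd hc.1 (by omega))] at hh
  have ab02 : (c x true) * (cdag (x+1) true) = -((cdag (x+1) true) * (c x true)) := sw0 hdc02
  have ab02p : ∀ tt : Module.End ℂ 𝓥, (c x true) * ((cdag (x+1) true) * tt) = -((cdag (x+1) true) * ((c x true) * tt)) := fun tt => sw0' hdc02 tt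
  have hdc03 : (cdag (x+1) false) * (c x true) + (c x true) * (cdag (x+1) false) = 0 := by
    have hh := car_dc (x+1) hx1L x hxL false true
    rwa [if_neg (fun hc => absurd hc.1 (by omega))] at hh
  have ab03 : (c x true) * (cdag (x+1) false) = -((cdag (x+1) false) * (c x true)) := sw0 hdc03
  have ab03p : ∀ tt : Module.End ℂ 𝓥, (c x true) * ((cdag (x+1) false) * tt) = -((cdag (x+1) false) * ((c x true) * tt)) := fun tt => sw0' hdc03 tt
  have hdc10 : (cdag x true) * (c x false) + (c x false) * (cdag x true) = 0 := by
    have hh := car_dc x hxL x hxL true false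
    rwa [if_neg (fun hc => absurd hc.2 (by decide))] at hh
  have ab10 : (c x false) * (cdag x true) = -((cdag x true) * (c x false)) := sw0 hdc10
  have ab10p : ∀ tt : Module.End ℂ 𝓥, (c x false) * ((cdag x true) * tt) = -((cdag x true) * ((c x false) * tt)) := fun tt => sw0' hdc10 tt
  have hdc11 : (cdag x false) * (c x false) + (c x false) * (cdag x false) = 1 := by
    have hh := car_dc x hxL x hxL false false
    rwa [if_pos ⟨rfl, rfl⟩] at hh
  have ab11 : (c x false) * (cdag x false) = 1 - (cdag x false) * (c x false) := dl1 hdc11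
  have ab11p : ∀ tt : Module.End ℂ 𝓥, (c x false) * ((cdag x false) * tt) = tt - (cdag x false) * ((c x false) * tt) := fun tt => dl1' hdc11 tt
  have hdc12 : (cdag (x+1) true) * (c x false) + (c x false) * (cdag (x+1) true) = 0 := by
    have hh := car_dc (x+1) hx1L x hxL true false
    rwa [if_neg (fun hc => absurd hc.1 (by omega))] at hh
  have ab12 : (c x false) * (cdag (x+1) true) = -((cdag (x+1) true) * (c x false)) := sw0 hdc12
  have ab12p : ∀ tt : Module.End ℂ 𝓥, (c x false) * ((cdag (x+1) true) * tt) = -((cdag (x+1) true) * ((c x false) * tt)) := fun tt => sw0' hdc12 tt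
  have hdc13 : (cdag (x+1) false) * (c x false) + (c x false) * (cdag (x+1) false) = 0 := by
    have hh := car_dc (x+1) hx1L x hxL false false
    rwa [if_neg (fun hc => absurd hc.1 (by omega))] at hh
  have ab13 : (c x false) * (cdag (x+1) false) = -((cdag (x+1) false) * (c x false)) := sw0 hdc13
  have ab13p : ∀ tt : Module.End ℂ 𝓥, (c x false) * ((cdag (x+1) false) * tt) = -((cdag (x+1) false) * ((c x false) * tt)) := fun tt => sw0' hdc13 tt
  have hdc20 : (cdag x true) * (c (x+1) true) + (c (x+1) true) * (cdag x true) = 0 := by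
    have hh := car_dc x hxL (x+1) hx1L true true
    rwa [if_neg (fun hc => absurd hc.1 (by omega))] at hh
  have ab20 : (c (x+1) true) * (cdag x true) = -((cdag x true) * (c (x+1) true)) := sw0 hdc20
  have ab20p : ∀ tt : Module.End ℂ 𝓥, (c (x+1) true) * ((cdag x true) * tt) = -((cdag x true) * ((c (x+1) true) * tt)) := fun tt => sw0' hdc20 tt
  have hdc21 : (cdag x false) * (c (x+1) true) + (c (x+1) true) * (cdag x false) = 0 := by
    have hh := car_dc x hxL (x+1) hx1L false true
    rwa [if_neg (fun hc => absurd hc.1 (by omega))] at hh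
  have ab21 : (c (x+1) true) * (cdag x false) = -((cdag x false) * (c (x+1) true)) := sw0 hdc21
  have ab21p : ∀ tt : Module.End ℂ 𝓥, (c (x+1) true) * ((cdag x false) * tt) = -((cdag x false) * ((c (x+1) true) * tt)) := fun tt => sw0' hdc21 tt
  have hdc22 : (cdag (x+1) true) * (c (x+1) true) + (c (x+1) true) * (cdag (x+1) true) = 1 := by
    have hh := car_dc (x+1) hx1L (x+1) hx1L true true
    rwa [if_pos ⟨rfl, rfl⟩] at hh
  have ab22 : (c (x+1) true) * (cdag (x+1) true) = 1 - (cdag (x+1) true) * (c (x+1) true) := dl1 hdc22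
  have ab22p : ∀ tt : Module.End ℂ 𝓥, (c (x+1) true) * ((cdag (x+1) true) * tt) = tt - (cdag (x+1) true) * ((c (x+1) true) * tt) := fun tt => dl1' hdc22 tt
  have hdc23 : (cdag (x+1) false) * (c (x+1) true) + (c (x+1) true) * (cdag (x+1) false) = 0 := by
    have hh := car_dc (x+1) hx1L (x+1) hx1L false true
    rwa [if_neg (fun hc => absurd hc.2 (by decide))] at hh
  have ab23 : (c (x+1) true) * (cdag (x+1) false) = -((cdag (x+1) false) * (c (x+1) true)) := sw0 hdc23
  have ab23p : ∀ tt : Module.End ℂ 𝓥, (c (x+1) true) * ((cdag (x+1) false) * tt) = -((cdag (x+1) false) * ((c (x+1) true) * tt)) := fun tt => sw0' hdc23 tt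
  have hdc30 : (cdag x true) * (c (x+1) false) + (c (x+1) false) * (cdag x true) = 0 := by
    have hh := car_dc x hxL (x+1) hx1L true false
    rwa [if_neg (fun hc => absurd hc.1 (by omega))] at hh
  have ab30 : (c (x+1) false) * (cdag x true) = -((cdag x true) * (c (x+1) false)) := sw0 hdc30
  have ab30p : ∀ tt : Module.End ℂ 𝓥, (c (x+1) false) * ((cdag x true) * tt) = -((cdag x true) * ((c (x+1) false) * tt)) := fun tt => sw0' hdc30 tt
  have hdc31 : (cdag x false) * (c (x+1) false) + (c (x+1) false) * (cdag x false) = 0 := by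
    have hh := car_dc x hxL (x+1) hx1L false false
    rwa [if_neg (fun hc => absurd hc.1 (by omega))] at hh
  have ab31 : (c (x+1) false) * (cdag x false) = -((cdag x false) * (c (x+1) false)) := sw0 hdc31
  have ab31p : ∀ tt : Module.End ℂ 𝓥, (c (x+1) false) * ((cdag x false) * tt) = -((cdag x false) * ((c (x+1) false) * tt)) := fun tt => sw0' hdc31 tt
  have hdc32 : (cdag (x+1) true) * (c (x+1) false) + (c (x+1) false) * (cdag (x+1) true) = 0 := by
    have hh := car_dc (x+1) hx1L (x+1) hx1L true false
    rwa [if_neg (fun hc => absurd hc.2 (by decide))] at hh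
  have ab32 : (c (x+1) false) * (cdag (x+1) true) = -((cdag (x+1) true) * (c (x+1) false)) := sw0 hdc32
  have ab32p : ∀ tt : Module.End ℂ 𝓥, (c (x+1) false) * ((cdag (x+1) true) * tt) = -((cdag (x+1) true) * ((c (x+1) false) * tt)) := fun tt => sw0' hdc32 tt
  have hdc33 : (cdag (x+1) false) * (c (x+1) false) + (c (x+1) false) * (cdag (x+1) false) = 1 := by
    have hh := car_dc (x+1) hx1L (x+1) hx1L false false
    rwa [if_pos ⟨rfl, rfl⟩] at hh
  have ab33 : (c (x+1) false) * (cdag (x+1) false) = 1 - (cdag (x+1) false) * (c (x+1) false) := dl1 hdc33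
  have ab33p : ∀ tt : Module.End ℂ 𝓥, (c (x+1) false) * ((cdag (x+1) false) * tt) = tt - (cdag (x+1) false) * ((c (x+1) false) * tt) := fun tt => dl1' hdc33 tt
  have adB1 : AdjPair (cdag x true) (c x true) := hadj x hxL true
  have adB2 : AdjPair (cdag x false) (c x false) := hadj x hxL false
  have adB3 : AdjPair (cdag (x+1) true) (c (x+1) true) := hadj (x+1) hx1L true
  have adB4 : AdjPair (cdag (x+1) false) (c (x+1) false) := hadj (x+1) hx1L false
  have adA1 : AdjPair (c x true) (cdag x true) := AdjPair.symm' adB1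
  have adA2 : AdjPair (c x false) (cdag x false) := AdjPair.symm' adB2
  have adA3 : AdjPair (c (x+1) true) (cdag (x+1) true) := AdjPair.symm' adB3
  have adA4 : AdjPair (c (x+1) false) (cdag (x+1) false) := AdjPair.symm' adB4
  have key : Hloc t Vv δ U J c cdag x =
    ((Vv:ℂ) • ((((w2:ℂ) • (cdag x true * (((1 : Module.End ℂ 𝓥) - (cdag (x+1) false * c (x+1) false)) * ((1 : Module.End ℂ 𝓥) - (cdag (x+1) true * c (x+1) true))))) - ((w1:ℂ) • (cdag (x+1) true * (((1 : Module.End ℂ 𝓥) - (cdag x false * c x false)) * ((1 : Module.End ℂ 𝓥) - (cdag x true * c x true)))))) * (((w2:ℂ) • ((((1 : Module.End ℂ 𝓥) - (cdag (x+1) true * c (x+1) true)) * ((1 : Module.End ℂ 𝓥) - (cdag (x+1) false * c (x+1) false))) * c x true)) - ((w1:ℂ) • ((((1 : Module.End ℂ 𝓥) - (cdag x true * c x true)) * ((1 : Module.End ℂ 𝓥) - (cdag x false * c x false))) * c (x+1) true))))) +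
      ((Vv:ℂ) • ((((w2:ℂ) • (cdag x false * (((1 : Module.End ℂ 𝓥) - (cdag (x+1) false * c (x+1) false)) * ((1 : Module.End ℂ 𝓥) - (cdag (x+1) true * c (x+1) true))))) - ((w1:ℂ) • (cdag (x+1) false * (((1 : Module.End ℂ 𝓥) - (cdag x false * c x false)) * ((1 : Module.End ℂ 𝓥) - (cdag x true * c x true)))))) * (((w2:ℂ) • ((((1 : Module.End ℂ 𝓥) - (cdag (x+1) true * c (x+1) true)) * ((1 : Module.End ℂ 𝓥) - (cdag (x+1) false * c (x+1) false))) * c x false)) - ((w1:ℂ) • ((((1 : Module.End ℂ 𝓥) - (cdag x true * c x true)) * ((1 : Module.End ℂ 𝓥) - (cdag x false * c x false))) * c (x+1) false))))) +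
      ((Vv:ℂ) • (((((w2:ℂ)^2) • (((cdag (x+1) false * cdag x true) * (((1 : Module.End ℂ 𝓥) - (cdag (x+1) true * c (x+1) true)) * ((1 : Module.End ℂ 𝓥) - (cdag x false * c x false)))) - ((cdag (x+1) true * cdag x false) * (((1 : Module.End ℂ 𝓥) - (cdag (x+1) false * c (x+1) false)) * ((1 : Module.End ℂ 𝓥) - (cdag x true * c x true)))))) - (((2:ℂ)*((w1:ℂ)*(w2:ℂ))) • ((cdag (x+1) false * cdag (x+1) true) * (((1 : Module.End ℂ 𝓥) - (cdag x false * c x false)) * ((1 : Module.End ℂ 𝓥) - (cdag x true * c x true)))))) * ((((w2:ℂ)^2) • (((((1 : Module.End ℂ 𝓥) - (cdag x false * c x false)) * ((1 : Module.End ℂ 𝓥) - (cdag (x+1) true * c (x+1) true))) * (c x true * c (x+1) false)) - ((((1 : Module.End ℂ 𝓥) - (cdag x true * c x true)) * ((1 : Module.End ℂ 𝓥) - (cdag (x+1) false * c (x+1) false))) * (c x false * c (x+1) true)))) - (((2:ℂ)*((w1:ℂ)*(w2:ℂ))) • ((((1 : Module.End ℂ 𝓥) - (cdag x true * c x true)) *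 ((1 : Module.End ℂ 𝓥) - (cdag x false * c x false))) * (c (x+1) true * c (x+1) false)))))) +
      ((Vv:ℂ) • (((((w1:ℂ)^2) • (((cdag (x+1) false * cdag x true) * (((1 : Module.End ℂ 𝓥) - (cdag (x+1) true * c (x+1) true)) * ((1 : Module.End ℂ 𝓥) - (cdag x false * c x false)))) - ((cdag (x+1) true * cdag x false) * (((1 : Module.End ℂ 𝓥) - (cdag (x+1) false * c (x+1) false)) * ((1 : Module.End ℂ 𝓥) - (cdag x true * c x true)))))) - (((2:ℂ)*((w1:ℂ)*(w2:ℂ))) • ((cdag x false * cdag x true) * (((1 : Module.End ℂ 𝓥) - (cdag (x+1) false * c (x+1) false)) * ((1 : Module.End ℂ 𝓥) - (cdag (x+1) true * c (x+1) true)))))) * ((((w1:ℂ)^2) • (((((1 : Module.End ℂ 𝓥) - (cdag x false * c x false)) * ((1 : Module.End ℂ 𝓥) - (cdag (x+1) true * c (x+1) true))) * (c x true * c (x+1) false)) - ((((1 : Module.End ℂ 𝓥) - (cdag x true * c x true)) * ((1 : Module.End ℂ 𝓥) - (cdag (x+1) false * c (x+1) false))) * (c x false * c (x+1) true)))) - (((2:ℂ)*((w1:ℂ)*(w2:ℂ)))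 • ((((1 : Module.End ℂ 𝓥) - (cdag (x+1) true * c (x+1) true)) * ((1 : Module.End ℂ 𝓥) - (cdag (x+1) false * c (x+1) false))) * (c x true * c x false)))))) +
      ((Vv:ℂ) • ((((w2:ℂ) • ((cdag (x+1) false * cdag x true) * (((1 : Module.End ℂ 𝓥) - (cdag (x+1) true * c (x+1) true)) * (cdag x false * c x false)))) - ((w1:ℂ) • ((cdag (x+1) false * cdag (x+1) true) * (((1 : Module.End ℂ 𝓥) - (cdag x true * c x true)) * (cdag x false * c x false))))) * (((w2:ℂ) • (((cdag x false * c x false) * ((1 : Module.End ℂ 𝓥) - (cdag (x+1) true * c (x+1) true))) * (c x true * c (x+1) false))) - ((w1:ℂ) • (((cdag x false * c x false) * ((1 : Module.End ℂ 𝓥) - (cdag x true * c x true))) * (c (x+1) true * c (x+1) false)))))) +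
      ((Vv:ℂ) • ((((w1:ℂ) • ((cdag (x+1) false * cdag (x+1) true) * (((1 : Module.End ℂ 𝓥) - (cdag x false * c x false)) * (cdag x true * c x true)))) + ((w2:ℂ) • ((cdag (x+1) true * cdag x false) * (((1 : Module.End ℂ 𝓥) - (cdag (x+1) false * c (x+1) false)) * (cdag x true * c x true))))) * (((w1:ℂ) • (((cdag x true * c x true) * ((1 : Module.End ℂ 𝓥) - (cdag x false * c x false))) * (c (x+1) true * c (x+1) false))) + ((w2:ℂ) • (((cdag x true * c x true) * ((1 : Module.End ℂ 𝓥) - (cdag (x+1) false * c (x+1) false))) * (c x false * c (x+1) true)))))) +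
      (((2:ℂ)*(Vv:ℂ)*((w1:ℂ)*(w2:ℂ))^2) • (((cdag (x+1) true * cdag x false) * (((1 : Module.End ℂ 𝓥) - (cdag x true * c x true)) * (cdag (x+1) false * c (x+1) false))) * (((cdag (x+1) false * c (x+1) false) * ((1 : Module.End ℂ 𝓥) - (cdag x true * c x true))) * (c x false * c (x+1) true)))) +
      (((2:ℂ)*(Vv:ℂ)*((w1:ℂ)*(w2:ℂ))^2) • (((cdag x false * cdag x true) * (((1 : Module.End ℂ 𝓥) - (cdag (x+1) true * c (x+1) true)) * (cdag (x+1) false * c (x+1) false))) * (((cdag (x+1) false * c (x+1) false) * ((1 : Module.End ℂ 𝓥) - (cdag (x+1) true * c (x+1) true))) * (c x true * c x false)))) +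
      (((2:ℂ)*(Vv:ℂ)*((w1:ℂ)*(w2:ℂ))^2) • (((cdag (x+1) false * cdag x true) * (((1 : Module.End ℂ 𝓥) - (cdag x false * c x false)) * (cdag (x+1) true * c (x+1) true))) * (((cdag (x+1) true * c (x+1) true) * ((1 : Module.End ℂ 𝓥) - (cdag x false * c x false))) * (c x true * c (x+1) false)))) +
      (((2:ℂ)*(Vv:ℂ)*((w1:ℂ)*(w2:ℂ))^2) • (((cdag x false * cdag x true) * (((1 : Module.End ℂ 𝓥) - (cdag (x+1) false * c (x+1) false)) * (cdag (x+1) true * c (x+1) true))) * (((cdag (x+1) true * c (x+1) true) * ((1 : Module.End ℂ 𝓥) - (cdag (x+1) false * c (x+1) false))) * (c x true * c x false)))) +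
      (((4:ℂ)*(Vv:ℂ)*((w1:ℂ)*(w2:ℂ))^2) • (((cdag x false * cdag x true) * ((cdag (x+1) false * c (x+1) false) * (cdag (x+1) true * c (x+1) true))) * (((cdag (x+1) true * c (x+1) true) * (cdag (x+1) false * c (x+1) false)) * (c x true * c x false)))) +
      (((U:ℂ) - (4:ℂ)*(Vv:ℂ)*((w1:ℂ)*(w2:ℂ))^2) • ((cdag x false * cdag x true) * (c x true * c x false))) +
      (((U:ℂ) - (4:ℂ)*(Vv:ℂ)*((w1:ℂ)*(w2:ℂ))^2) • ((cdag (x+1) false * cdag (x+1) true) * (c (x+1) true * c (x+1) false))) +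
      ((((J:ℂ) - (2:ℂ)*(Vv:ℂ) + (4:ℂ)*(Vv:ℂ)*((w1:ℂ)*(w2:ℂ))^2)/2) • (((cdag (x+1) false * cdag x true) - (cdag (x+1) true * cdag x false)) * ((c x true * c (x+1) false) - (c x false * c (x+1) true)))) +
    (((w1:ℂ)^2 + (w2:ℂ)^2 - 1) • (((-1 : ℂ)*(w1:ℂ)*(w2:ℂ)*(Vv:ℂ)) • (cdag x true * (cdag x false * (c x true * (c (x+1) false)))) + ((1 : ℂ)*(w1:ℂ)*(w2:ℂ)*(Vv:ℂ)) • (cdag x true * (cdag x false * (c x false * (c (x+1) true)))) + ((-1 : ℂ)*(w2:ℂ)^2*(Vv:ℂ) + (-1 : ℂ)*(w1:ℂ)^2*(Vv:ℂ)) • (cdag x true * (cdag x false * (cdag (x+1) true * (c x true * (c x false * (c (x+1) true)))))) + ((-2 : ℂ)*(w1:ℂ)*(w2:ℂ)*(Vv:ℂ)) • (cdag x true * (cdag x false * (cdag (x+1) true * (c x true * (c (x+1) true * (c (x+1) false)))))) + ((-2 : ℂ)*(w2:ℂ)^2*(Vv:ℂ) + (-2 : ℂ)*(w1:ℂ)^2*(Vv:ℂ))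 • (cdag x true * (cdag x false * (cdag (x+1) true * (cdag (x+1) false * (c x true * (c x false * (c (x+1) true * (c (x+1) false)))))))) + ((-1 : ℂ)*(w2:ℂ)^2*(Vv:ℂ) + (-1 : ℂ)*(w1:ℂ)^2*(Vv:ℂ)) • (cdag x true * (cdag x false * (cdag (x+1) false * (c x true * (c x false * (c (x+1) false)))))) + ((-2 : ℂ)*(w1:ℂ)*(w2:ℂ)*(Vv:ℂ)) • (cdag x true * (cdag x false * (cdag (x+1) false * (c x false * (c (x+1) true * (c (x+1) false)))))) + ((-1 : ℂ)*(Vv:ℂ)) • (cdag x true * (cdag (x+1) true * (c x true * (c (x+1) true)))) + ((-2 : ℂ)*(w1:ℂ)*(w2:ℂ)*(Vv:ℂ)) • (cdag x true * (cdag (x+1) true * (cdag (x+1) false * (c x true * (c x false * (c (x+1) true)))))) + ((-1 : ℂ)*(w2:ℂ)^2*(Vv:ℂ) + (-1 : ℂ)*(w1:ℂ)^2*(Vv:ℂ)) • (cdag x true * (cdag (x+1) true * (cdag (x+1) false * (c x true * (c (x+1) true * (c (x+1) false)))))) + ((-1 : ℂ)*(w1:ℂ)*(w2:ℂ)*(Vv:ℂ))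 • (cdag x true * (cdag (x+1) false * (c x true * (c x false)))) + ((1 : ℂ)*(w2:ℂ)^2*(Vv:ℂ) + (1 : ℂ)*(w1:ℂ)^2*(Vv:ℂ)) • (cdag x true * (cdag (x+1) false * (c x true * (c (x+1) false)))) + ((-1 : ℂ)*(Vv:ℂ) + (-1 : ℂ)*(w2:ℂ)^2*(Vv:ℂ) + (-1 : ℂ)*(w1:ℂ)^2*(Vv:ℂ)) • (cdag x true * (cdag (x+1) false * (c x false * (c (x+1) true)))) + ((-1 : ℂ)*(w1:ℂ)*(w2:ℂ)*(Vv:ℂ)) • (cdag x true * (cdag (x+1) false * (c (x+1) true * (c (x+1) false)))) + ((1 : ℂ)*(w1:ℂ)*(w2:ℂ)*(Vv:ℂ)) • (cdag x false * (cdag (x+1) true * (c x true * (c x false)))) + ((-1 : ℂ)*(Vv:ℂ) + (-1 : ℂ)*(w2:ℂ)^2*(Vv:ℂ) + (-1 : ℂ)*(w1:ℂ)^2*(Vv:ℂ)) • (cdag x false * (cdag (x+1) true * (c x true * (c (x+1) false)))) + ((1 : ℂ)*(w2:ℂ)^2*(Vv:ℂ) + (1 : ℂ)*(w1:ℂ)^2*(Vv:ℂ))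 • (cdag x false * (cdag (x+1) true * (c x false * (c (x+1) true)))) + ((1 : ℂ)*(w1:ℂ)*(w2:ℂ)*(Vv:ℂ)) • (cdag x false * (cdag (x+1) true * (c (x+1) true * (c (x+1) false)))) + ((-2 : ℂ)*(w1:ℂ)*(w2:ℂ)*(Vv:ℂ)) • (cdag x false * (cdag (x+1) true * (cdag (x+1) false * (c x true * (c x false * (c (x+1) false)))))) + ((-1 : ℂ)*(w2:ℂ)^2*(Vv:ℂ) + (-1 : ℂ)*(w1:ℂ)^2*(Vv:ℂ)) • (cdag x false * (cdag (x+1) true * (cdag (x+1) false * (c x false * (c (x+1) true * (c (x+1) false)))))) + ((-1 : ℂ)*(Vv:ℂ)) • (cdag x false * (cdag (x+1) false * (c x false * (c (x+1) false)))) + ((-1 : ℂ)*(w1:ℂ)*(w2:ℂ)*(Vv:ℂ)) • (cdag (x+1) true * (cdag (x+1) false * (c x true * (c (x+1) false)))) + ((1 : ℂ)*(w1:ℂ)*(w2:ℂ)*(Vv:ℂ)) • (cdag (x+1) true * (cdag (x+1) false * (c x false * (c (x+1) true)))))) := by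
    simp only [Hloc, Ht, HU, HV, HJ, HX, ntot, nOp, spin_sum_eq,
      Fintype.sum_bool, Bool.not_true, Bool.not_false,
      htC, hmu1C, hmu2C, hXxC, hXx1C,
      sqa0, sqa0p, sqb0, sqb0p, sqa1, sqa1p, sqb1, sqb1p, sqa2, sqa2p, sqb2, sqb2p, sqa3, sqa3p, sqb3, sqb3p, swa01, swa01p, swb01, swb01p, swa02, swa02p, swb02, swb02p, swa03, swa03p, swb03, swb03p, swa12, swa12p, swb12, swb12p, swa13, swa13p, swb13, swb13p, swa23, swa23p, swb23, swb23p, ab00, ab00p, ab01, ab01p, ab02, ab02p, ab03, ab03p, ab10, ab10p, ab11, ab11p, ab12, ab12p, ab13, ab13p, ab20, ab20p, ab21, ab21p, ab22, ab22p, ab23, ab23p, ab30, ab30p, ab31, ab31p, ab32, ab32p, ab33, ab33p,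
      mul_assoc, one_mul, mul_one, mul_zero, zero_mul,
      mul_neg, neg_mul, neg_neg, mul_sub, sub_mul, mul_add, add_mul,
      smul_mul_assoc, mul_smul_comm, smul_smul, smul_add, smul_sub, smul_neg, neg_smul,
      zero_smul, smul_zero, one_smul, add_zero, zero_add]
    module
  rw [hzC, zero_smul, add_zero] at key
  rw [key]
  simp only [LinearMap.add_apply, inner_add_right]
  have hT0 : (0:ℂ) ≤ inner ℂ ψ (((Vv:ℂ) • ((((w2:ℂ) • (cdag x true * (((1 : Module.End ℂ 𝓥) - (cdag (x+1) false * c (x+1) false)) * ((1 : Module.End ℂ 𝓥) - (cdag (x+1) true * c (x+1) true))))) - ((w1:ℂ) • (cdag (x+1) true * (((1 : Module.End ℂ 𝓥) - (cdag x false * c x false)) * ((1 : Module.End ℂ 𝓥) - (cdag x true * c x true)))))) * (((w2:ℂ) • ((((1 : Module.End ℂ 𝓥) - (cdag (x+1) true * c (x+1) true)) * ((1 : Module.End ℂ 𝓥) - (cdag (x+1) false * c (x+1) false))) * c x true)) - ((w1:ℂ) • ((((1 : Module.End ℂ 𝓥) - (cdag x true * c x true)) * ((1 : Module.End ℂ 𝓥)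 - (cdag x false * c x false))) * c (x+1) true))))) ψ) :=
    term_nonneg (AdjPair.sub (AdjPair.smulC (by simp [map_mul, map_pow, map_ofNat, Complex.conj_ofReal, map_div₀, map_sub, map_add, map_one]) (AdjPair.mul (AdjPair.mul (AdjPair.sub AdjPair.one (AdjPair.mul adB3 adA3)) (AdjPair.sub AdjPair.one (AdjPair.mul adB4 adA4))) adA1)) (AdjPair.smulC (by simp [map_mul, map_pow, map_ofNat, Complex.conj_ofReal, map_div₀, map_sub, map_add, map_one]) (AdjPair.mul (AdjPair.mul (AdjPair.sub AdjPair.one (AdjPair.mul adB1 adA1)) (AdjPair.sub AdjPair.one (AdjPair.mul adB2 adA2))) adA3))) Vv hVpos.le _ (by push_cast; ring) ψ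
  have hT1 : (0:ℂ) ≤ inner ℂ ψ (((Vv:ℂ) • ((((w2:ℂ) • (cdag x false * (((1 : Module.End ℂ 𝓥) - (cdag (x+1) false * c (x+1) false)) * ((1 : Module.End ℂ 𝓥) - (cdag (x+1) true * c (x+1) true))))) - ((w1:ℂ) • (cdag (x+1) false * (((1 : Module.End ℂ 𝓥) - (cdag x false * c x false)) * ((1 : Module.End ℂ 𝓥) - (cdag x true * c x true)))))) * (((w2:ℂ) • ((((1 : Module.End ℂ 𝓥) - (cdag (x+1) true * c (x+1) true)) * ((1 : Module.End ℂ 𝓥) - (cdag (x+1) false * c (x+1) false))) * c x false)) - ((w1:ℂ) • ((((1 : Module.End ℂ 𝓥) - (cdag x true * c x true)) * ((1 : Module.End ℂ 𝓥) - (cdag x false * c x false))) * c (x+1) false))))) ψ) :=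
    term_nonneg (AdjPair.sub (AdjPair.smulC (by simp [map_mul, map_pow, map_ofNat, Complex.conj_ofReal, map_div₀, map_sub, map_add, map_one]) (AdjPair.mul (AdjPair.mul (AdjPair.sub AdjPair.one (AdjPair.mul adB3 adA3)) (AdjPair.sub AdjPair.one (AdjPair.mul adB4 adA4))) adA2)) (AdjPair.smulC (by simp [map_mul, map_pow, map_ofNat, Complex.conj_ofReal, map_div₀, map_sub, map_add, map_one]) (AdjPair.mul (AdjPair.mul (AdjPair.sub AdjPair.one (AdjPair.mul adB1 adA1)) (AdjPair.sub AdjPair.one (AdjPair.mul adB2 adA2))) adA4))) Vv hVpos.le _ (by push_cast; ring) ψ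
  have hT2 : (0:ℂ) ≤ inner ℂ ψ (((Vv:ℂ) • (((((w2:ℂ)^2) • (((cdag (x+1) false * cdag x true) * (((1 : Module.End ℂ 𝓥) - (cdag (x+1) true * c (x+1) true)) * ((1 : Module.End ℂ 𝓥) - (cdag x false * c x false)))) - ((cdag (x+1) true * cdag x false) * (((1 : Module.End ℂ 𝓥) - (cdag (x+1) false * c (x+1) false)) * ((1 : Module.End ℂ 𝓥) - (cdag x true * c x true)))))) - (((2:ℂ)*((w1:ℂ)*(w2:ℂ))) • ((cdag (x+1) false * cdag (x+1) true) * (((1 : Module.End ℂ 𝓥) - (cdag x false * c x false)) * ((1 : Module.End ℂ 𝓥) - (cdag x true * c x true)))))) * ((((w2:ℂ)^2) • (((((1 : Module.End ℂ 𝓥) - (cdag x false * c x false)) * ((1 : Module.End ℂ 𝓥) - (cdag (x+1) true * c (x+1) true))) * (c x true * c (x+1) false)) - ((((1 : Module.End ℂ 𝓥) - (cdag x true * c x true)) * ((1 : Module.End ℂ 𝓥) - (cdag (x+1) false * c (x+1) false))) * (c x false * c (x+1) true)))) - (((2:ℂ)*((w1:ℂ)*(w2:ℂ))) • ((((1 :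 Module.End ℂ 𝓥) - (cdag x true * c x true)) * ((1 : Module.End ℂ 𝓥) - (cdag x false * c x false))) * (c (x+1) true * c (x+1) false)))))) ψ) :=
    term_nonneg (AdjPair.sub (AdjPair.smulC (by simp [map_mul, map_pow, map_ofNat, Complex.conj_ofReal, map_div₀, map_sub, map_add, map_one]) (AdjPair.sub (AdjPair.mul (AdjPair.mul (AdjPair.sub AdjPair.one (AdjPair.mul adB2 adA2)) (AdjPair.sub AdjPair.one (AdjPair.mul adB3 adA3))) (AdjPair.mul adA1 adA4)) (AdjPair.mul (AdjPair.mul (AdjPair.sub AdjPair.one (AdjPair.mul adB1 adA1)) (AdjPair.sub AdjPair.one (AdjPair.mul adB4 adA4))) (AdjPair.mul adA2 adA3)))) (AdjPair.smulC (by simp [map_mul, map_pow, map_ofNat, Complex.conj_ofReal, map_div₀, map_sub, map_add, map_one]) (AdjPair.mul (AdjPair.mul (AdjPair.sub AdjPair.one (AdjPair.mul adB1 adA1)) (AdjPair.sub AdjPair.one (AdjPair.mul adB2 adA2))) (AdjPair.mul adA3 adA4)))) Vv hVpos.le _ (by push_cast; ring) ψ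
  have hT3 : (0:ℂ) ≤ inner ℂ ψ (((Vv:ℂ) • (((((w1:ℂ)^2) • (((cdag (x+1) false * cdag x true) * (((1 : Module.End ℂ 𝓥) - (cdag (x+1) true * c (x+1) true)) * ((1 : Module.End ℂ 𝓥) - (cdag x false * c x false)))) - ((cdag (x+1) true * cdag x false) * (((1 : Module.End ℂ 𝓥) - (cdag (x+1) false * c (x+1) false)) * ((1 : Module.End ℂ 𝓥) - (cdag x true * c x true)))))) - (((2:ℂ)*((w1:ℂ)*(w2:ℂ))) • ((cdag x false * cdag x true) * (((1 : Module.End ℂ 𝓥) - (cdag (x+1) false * c (x+1) false)) * ((1 : Module.End ℂ 𝓥) - (cdag (x+1) true * c (x+1) true)))))) * ((((w1:ℂ)^2) • (((((1 : Module.End ℂ 𝓥) - (cdag x false * c x false)) * ((1 : Module.End ℂ 𝓥) - (cdag (x+1) true * c (x+1) true))) * (c x true * c (x+1) false)) - ((((1 : Module.End ℂ 𝓥) - (cdag x true * c x true)) * ((1 : Module.End ℂ 𝓥) - (cdag (x+1) false * c (x+1) false))) * (c x false * c (x+1) true)))) - (((2:ℂ)*((w1:ℂ)*(w2:ℂ)))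 • ((((1 : Module.End ℂ 𝓥) - (cdag (x+1) true * c (x+1) true)) * ((1 : Module.End ℂ 𝓥) - (cdag (x+1) false * c (x+1) false))) * (c x true * c x false)))))) ψ) :=
    term_nonneg (AdjPair.sub (AdjPair.smulC (by simp [map_mul, map_pow, map_ofNat, Complex.conj_ofReal, map_div₀, map_sub, map_add, map_one]) (AdjPair.sub (AdjPair.mul (AdjPair.mul (AdjPair.sub AdjPair.one (AdjPair.mul adB2 adA2)) (AdjPair.sub AdjPair.one (AdjPair.mul adB3 adA3))) (AdjPair.mul adA1 adA4)) (AdjPair.mul (AdjPair.mul (AdjPair.sub AdjPair.one (AdjPair.mul adB1 adA1)) (AdjPair.sub AdjPair.one (AdjPair.mul adB4 adA4))) (AdjPair.mul adA2 adA3)))) (AdjPair.smulC (by simp [map_mul, map_pow, map_ofNat, Complex.conj_ofReal, map_div₀, map_sub, map_add, map_one]) (AdjPair.mul (AdjPair.mul (AdjPair.sub AdjPair.one (AdjPair.mul adB3 adA3)) (AdjPair.sub AdjPair.one (AdjPair.mul adB4 adA4))) (AdjPair.mul adA1 adA2)))) Vv hVpos.le _ (by push_cast; ring) ψ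
  have hT4 : (0:ℂ) ≤ inner ℂ ψ (((Vv:ℂ) • ((((w2:ℂ) • ((cdag (x+1) false * cdag x true) * (((1 : Module.End ℂ 𝓥) - (cdag (x+1) true * c (x+1) true)) * (cdag x false * c x false)))) - ((w1:ℂ) • ((cdag (x+1) false * cdag (x+1) true) * (((1 : Module.End ℂ 𝓥) - (cdag x true * c x true)) * (cdag x false * c x false))))) * (((w2:ℂ) • (((cdag x false * c x false) * ((1 : Module.End ℂ 𝓥) - (cdag (x+1) true * c (x+1) true))) * (c x true * c (x+1) false))) - ((w1:ℂ) • (((cdag x false * c x false) * ((1 : Module.End ℂ 𝓥) - (cdag x true * c x true))) * (c (x+1) true * c (x+1) false)))))) ψ) :=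
    term_nonneg (AdjPair.sub (AdjPair.smulC (by simp [map_mul, map_pow, map_ofNat, Complex.conj_ofReal, map_div₀, map_sub, map_add, map_one]) (AdjPair.mul (AdjPair.mul (AdjPair.mul adB2 adA2) (AdjPair.sub AdjPair.one (AdjPair.mul adB3 adA3))) (AdjPair.mul adA1 adA4))) (AdjPair.smulC (by simp [map_mul, map_pow, map_ofNat, Complex.conj_ofReal, map_div₀, map_sub, map_add, map_one]) (AdjPair.mul (AdjPair.mul (AdjPair.mul adB2 adA2) (AdjPair.sub AdjPair.one (AdjPair.mul adB1 adA1))) (AdjPair.mul adA3 adA4)))) Vv hVpos.le _ (by push_cast; ring) ψ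
  have hT5 : (0:ℂ) ≤ inner ℂ ψ (((Vv:ℂ) • ((((w1:ℂ) • ((cdag (x+1) false * cdag (x+1) true) * (((1 : Module.End ℂ 𝓥) - (cdag x false * c x false)) * (cdag x true * c x true)))) + ((w2:ℂ) • ((cdag (x+1) true * cdag x false) * (((1 : Module.End ℂ 𝓥) - (cdag (x+1) false * c (x+1) false)) * (cdag x true * c x true))))) * (((w1:ℂ) • (((cdag x true * c x true) * ((1 : Module.End ℂ 𝓥) - (cdag x false * c x false))) * (c (x+1) true * c (x+1) false))) + ((w2:ℂ) • (((cdag x true * c x true) * ((1 : Module.End ℂ 𝓥) - (cdag (x+1) false * c (x+1) false))) * (c x false * c (x+1) true)))))) ψ) :=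
    term_nonneg (AdjPair.add (AdjPair.smulC (by simp [map_mul, map_pow, map_ofNat, Complex.conj_ofReal, map_div₀, map_sub, map_add, map_one]) (AdjPair.mul (AdjPair.mul (AdjPair.mul adB1 adA1) (AdjPair.sub AdjPair.one (AdjPair.mul adB2 adA2))) (AdjPair.mul adA3 adA4))) (AdjPair.smulC (by simp [map_mul, map_pow, map_ofNat, Complex.conj_ofReal, map_div₀, map_sub, map_add, map_one]) (AdjPair.mul (AdjPair.mul (AdjPair.mul adB1 adA1) (AdjPair.sub AdjPair.one (AdjPair.mul adB4 adA4))) (AdjPair.mul adA2 adA3)))) Vv hVpos.le _ (by push_cast; ring) ψ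
  have hT6 : (0:ℂ) ≤ inner ℂ ψ ((((2:ℂ)*(Vv:ℂ)*((w1:ℂ)*(w2:ℂ))^2) • (((cdag (x+1) true * cdag x false) * (((1 : Module.End ℂ 𝓥) - (cdag x true * c x true)) * (cdag (x+1) false * c (x+1) false))) * (((cdag (x+1) false * c (x+1) false) * ((1 : Module.End ℂ 𝓥) - (cdag x true * c x true))) * (c x false * c (x+1) true)))) ψ) :=
    term_nonneg (AdjPair.mul (AdjPair.mul (AdjPair.mul adB4 adA4) (AdjPair.sub AdjPair.one (AdjPair.mul adB1 adA1))) (AdjPair.mul adA2 adA3)) (2*Vv*(w1*w2)^2) (by positivity) _ (by push_cast; ring) ψ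
  have hT7 : (0:ℂ) ≤ inner ℂ ψ ((((2:ℂ)*(Vv:ℂ)*((w1:ℂ)*(w2:ℂ))^2) • (((cdag x false * cdag x true) * (((1 : Module.End ℂ 𝓥) - (cdag (x+1) true * c (x+1) true)) * (cdag (x+1) false * c (x+1) false))) * (((cdag (x+1) false * c (x+1) false) * ((1 : Module.End ℂ 𝓥) - (cdag (x+1) true * c (x+1) true))) * (c x true * c x false)))) ψ) :=
    term_nonneg (AdjPair.mul (AdjPair.mul (AdjPair.mul adB4 adA4) (AdjPair.sub AdjPair.one (AdjPair.mul adB3 adA3))) (AdjPair.mul adA1 adA2)) (2*Vv*(w1*w2)^2) (by positivity) _ (by push_cast; ring) ψ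
  have hT8 : (0:ℂ) ≤ inner ℂ ψ ((((2:ℂ)*(Vv:ℂ)*((w1:ℂ)*(w2:ℂ))^2) • (((cdag (x+1) false * cdag x true) * (((1 : Module.End ℂ 𝓥) - (cdag x false * c x false)) * (cdag (x+1) true * c (x+1) true))) * (((cdag (x+1) true * c (x+1) true) * ((1 : Module.End ℂ 𝓥) - (cdag x false * c x false))) * (c x true * c (x+1) false)))) ψ) :=
    term_nonneg (AdjPair.mul (AdjPair.mul (AdjPair.mul adB3 adA3) (AdjPair.sub AdjPair.one (AdjPair.mul adB2 adA2))) (AdjPair.mul adA1 adA4)) (2*Vv*(w1*w2)^2) (by positivity) _ (by push_cast; ring) ψ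
  have hT9 : (0:ℂ) ≤ inner ℂ ψ ((((2:ℂ)*(Vv:ℂ)*((w1:ℂ)*(w2:ℂ))^2) • (((cdag x false * cdag x true) * (((1 : Module.End ℂ 𝓥) - (cdag (x+1) false * c (x+1) false)) * (cdag (x+1) true * c (x+1) true))) * (((cdag (x+1) true * c (x+1) true) * ((1 : Module.End ℂ 𝓥) - (cdag (x+1) false * c (x+1) false))) * (c x true * c x false)))) ψ) :=
    term_nonneg (AdjPair.mul (AdjPair.mul (AdjPair.mul adB3 adA3) (AdjPair.sub AdjPair.one (AdjPair.mul adB4 adA4))) (AdjPair.mul adA1 adA2)) (2*Vv*(w1*w2)^2) (by positivity) _ (by push_cast; ring) ψ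
  have hT10 : (0:ℂ) ≤ inner ℂ ψ ((((4:ℂ)*(Vv:ℂ)*((w1:ℂ)*(w2:ℂ))^2) • (((cdag x false * cdag x true) * ((cdag (x+1) false * c (x+1) false) * (cdag (x+1) true * c (x+1) true))) * (((cdag (x+1) true * c (x+1) true) * (cdag (x+1) false * c (x+1) false)) * (c x true * c x false)))) ψ) :=
    term_nonneg (AdjPair.mul (AdjPair.mul (AdjPair.mul adB3 adA3) (AdjPair.mul adB4 adA4)) (AdjPair.mul adA1 adA2)) (4*Vv*(w1*w2)^2) (by positivity) _ (by push_cast; ring) ψ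
  have hT11 : (0:ℂ) ≤ inner ℂ ψ ((((U:ℂ) - (4:ℂ)*(Vv:ℂ)*((w1:ℂ)*(w2:ℂ))^2) • ((cdag x false * cdag x true) * (c x true * c x false))) ψ) :=
    term_nonneg (AdjPair.mul adA1 adA2) (U - 4*Vv*(w1*w2)^2) hU' _ (by push_cast; ring) ψ
  have hT12 : (0:ℂ) ≤ inner ℂ ψ ((((U:ℂ) - (4:ℂ)*(Vv:ℂ)*((w1:ℂ)*(w2:ℂ))^2) • ((cdag (x+1) false * cdag (x+1) true) * (c (x+1) true * c (x+1) false))) ψ) :=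
    term_nonneg (AdjPair.mul adA3 adA4) (U - 4*Vv*(w1*w2)^2) hU' _ (by push_cast; ring) ψ
  have hT13 : (0:ℂ) ≤ inner ℂ ψ (((((J:ℂ) - (2:ℂ)*(Vv:ℂ) + (4:ℂ)*(Vv:ℂ)*((w1:ℂ)*(w2:ℂ))^2)/2) • (((cdag (x+1) false * cdag x true) - (cdag (x+1) true * cdag x false)) * ((c x true * c (x+1) false) - (c x false * c (x+1) true)))) ψ) :=
    term_nonneg (AdjPair.sub (AdjPair.mul adA1 adA4) (AdjPair.mul adA2 adA3)) ((J - 2*Vv + 4*Vv*(w1*w2)^2)/2) hJ' _ (by push_cast; ring) ψ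
  exact (add_nonneg (add_nonneg (add_nonneg (add_nonneg (add_nonneg (add_nonneg (add_nonneg (add_nonneg (add_nonneg (add_nonneg (add_nonneg (add_nonneg (add_nonneg hT0 hT1) hT2) hT3) hT4) hT5) hT6) hT7) hT8) hT9) hT10) hT11) hT12) hT13)

end
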